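/- For all n ≥ 1, M₁(n) ≤ √(3n) + 4. -/
import Mathlib


/-- The domain of a partial word (a list over `Option A`, where `none` is the hole):
the set of positions carrying a letter. -/
def PartialWord.domain {A : Type*} (w : List (Option A)) : Finset ℕ :=
  (Finset.range w.length).filter fun i => (w.getD i none).isSome

/-- Two partial words are compatible if they have the same length and agree on the
intersection of their domains. -/
def PartialWord.Compatible {A : Type*} (w v : List (Option A)) : Prop :=
  w.length = v.length ∧
    ∀ i ∈ PartialWord.domain w ∩ PartialWord.domain v, w.getD i none = v.getD i none

/-- A partial word is unbordered if no nonempty proper prefix is compatible with a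
suffix of the same length. -/
def PartialWord.Unbordered {A : Type*} (w : List (Option A)) : Prop :=
  ∀ x y : List (Option A), x <+: w → y <:+ w → x ≠ [] → x.length < w.length →
    x.length = y.length → ¬ PartialWord.Compatible x y

/-- The number of holes of a partial word. -/
def PartialWord.holes {A : Type*} (w : List (Option A)) : ℕ :=
  w.countP fun x => x.isNone

/-- `u` repeated `t` times. -/
def listPow {α : Type*} (u : List α) (t : ℕ) : List α := (List.replicate t u).flatten

/-- A complete sparse ruler of length `n`. -/
def IsCompleteRuler (n : ℕ) (R : Finset ℕ) : Prop :=
  (∀ x ∈ R, x ≤ n) ∧ 0 ∈ R ∧ n ∈ R ∧ ∀ d ≤ n, ∃ r ∈ R, ∃ s ∈ R, r = s + d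

/-- Minimum number of marks of a complete sparse ruler of length `n`. -/
noncomputable def M1 (n : ℕ) : ℕ :=
  sInf {k | ∃ R : Finset ℕ, IsCompleteRuler n R ∧ R.card = k}

/-- Maximum number of holes an unbordered partial word of length `n` over an alphabet
of size `k` can have. -/
noncomputable def HB (k n : ℕ) : ℕ :=
  sSup {h | ∃ w : List (Option (Fin k)),
    w.length = n ∧ PartialWord.Unbordered w ∧ PartialWord.holes w = h}

/-- The ruler (set of partial sums) given by a difference representation. -/
def rulerOfDiffs (D : List ℕ) : Finset ℕ :=
  ((List.range (D.length + 1)).map fun t => (D.take t).sum).toFinset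

/-- The difference representation of the extended Wichmann ruler `w₁(r,s,i,j)`. -/
def wichmannDiffs (r s i j : ℕ) : List ℕ :=
  List.replicate r 1 ++ [r + 1] ++ List.replicate r (2 * r + 1) ++
    List.replicate s (4 * r + 3) ++ List.replicate (r + 1) (2 * r + 2) ++
    List.replicate r 1 ++ List.replicate i (r + 1) ++ [j]

/-- A complete two-dimensional sparse ruler: an `(n,m)`-ruler. -/
def IsRuler2 (n m : ℕ) (R : Finset (ℕ × ℕ)) : Prop :=
  (∀ p ∈ R, p.1 < n ∧ p.2 < m) ∧
    ∀ x y : ℤ, |x| ≤ (n : ℤ) - 1 → |y| ≤ (m : ℤ) - 1 →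
      ∃ p ∈ R, ∃ q ∈ R, (p.1 : ℤ) - (q.1 : ℤ) = x ∧ (p.2 : ℤ) - (q.2 : ℤ) = y

/-- Minimum number of marks of an `(n,m)`-ruler. -/
noncomputable def M2 (n m : ℕ) : ℕ :=
  sInf {k | ∃ R : Finset (ℕ × ℕ), IsRuler2 n m R ∧ R.card = k}

/-- The domain of an `n` by `m` two-dimensional partial word. -/
def domain2 {A : Type*} (n m : ℕ) (w : ℕ × ℕ → Option A) : Finset (ℕ × ℕ) :=
  (Finset.range n ×ˢ Finset.range m).filter fun p => (w p).isSome

/-- An `n` by `m` two-dimensional partial word is unbordered if its domain is an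
`(n,m)`-ruler and every nonzero measurable vector can be measured between two
positions carrying distinct letters. -/
def Unbordered2 {A : Type*} (n m : ℕ) (w : ℕ × ℕ → Option A) : Prop :=
  IsRuler2 n m (domain2 n m w) ∧
    ∀ x y : ℤ, |x| ≤ (n : ℤ) - 1 → |y| ≤ (m : ℤ) - 1 → ¬(x = 0 ∧ y = 0) →
      ∃ p ∈ domain2 n m w, ∃ q ∈ domain2 n m w,
        (p.1 : ℤ) - (q.1 : ℤ) = x ∧ (p.2 : ℤ) - (q.2 : ℤ) = y ∧ w p ≠ w q

/-- Number of holes of an `n` by `m` two-dimensional partial word. -/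
def holes2 {A : Type*} (n m : ℕ) (w : ℕ × ℕ → Option A) : ℕ :=
  n * m - (domain2 n m w).card

/-- Maximum number of holes an unbordered `n` by `m` two-dimensional partial word
over an alphabet of size `k` can have. -/
noncomputable def HB2 (k n m : ℕ) : ℕ :=
  sSup {h | ∃ w : ℕ × ℕ → Option (Fin k), Unbordered2 n m w ∧ holes2 n m w = h}


namespace SparseAux

/-- The marks of the extended Wichmann ruler. -/
def W (r s i j : ℕ) : Finset ℕ :=
  (Finset.range (r+1)) ∪
  ((Finset.range (r+1)).image fun m => (m+1)*(2*r+1)) ∪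
  ((Finset.range s).image fun k => (r+1)*(2*r+1) + (k+1)*(4*r+3)) ∪
  ((Finset.range (r+1)).image fun m => (r+1)*(2*r+1) + s*(4*r+3) + (m+1)*(2*r+2)) ∪
  ((Finset.range r).image fun t => (r+1+s)*(4*r+3) + (t+1)) ∪
  ((Finset.range i).image fun k => (r+1+s)*(4*r+3) + r + (k+1)*(r+1)) ∪
  {(r+1+s)*(4*r+3) + r + i*(r+1) + j}

variable {r s i j : ℕ}

lemma mem1 (a : ℕ) (h : a ≤ r) : a ∈ W r s i j := by
  simp only [W, Finset.mem_union, Finset.mem_image, Finset.mem_range, Finset.mem_singleton]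
  exact Or.inl (Or.inl (Or.inl (Or.inl (Or.inl (Or.inl (by omega))))))

lemma mem2 (m : ℕ) (h : m ≤ r+1) : m*(2*r+1) ∈ W r s i j := by
  cases m with
  | zero => simpa using mem1 0 (Nat.zero_le r)
  | succ m' =>
    simp only [W, Finset.mem_union, Finset.mem_image, Finset.mem_range, Finset.mem_singleton]
    exact Or.inl (Or.inl (Or.inl (Or.inl (Or.inl (Or.inr ⟨m', by omega, rfl⟩)))))

lemma mem3 (k : ℕ) (h : k ≤ s) : (r+1)*(2*r+1) + k*(4*r+3) ∈ W r s i j := by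
  cases k with
  | zero => simpa using mem2 (r+1) le_rfl
  | succ k' =>
    simp only [W, Finset.mem_union, Finset.mem_image, Finset.mem_range, Finset.mem_singleton]
    exact Or.inl (Or.inl (Or.inl (Or.inl (Or.inr ⟨k', by omega, rfl⟩))))

lemma mem4 (m : ℕ) (h : m ≤ r+1) :
    (r+1)*(2*r+1) + s*(4*r+3) + m*(2*r+2) ∈ W r s i j := by
  cases m with
  | zero => simpa using mem3 s le_rfl
  | succ m' =>
    simp only [W, Finset.mem_union, Finset.mem_image, Finset.mem_range, Finset.mem_singleton]
    exact Or.inl (Or.inl (Or.inl (Or.inr ⟨m', by omega, rfl⟩)))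

lemma mem5 (t : ℕ) (h : t ≤ r) : (r+1+s)*(4*r+3) + t ∈ W r s i j := by
  cases t with
  | zero =>
    have e : (r+1+s)*(4*r+3) + 0 = (r+1)*(2*r+1) + s*(4*r+3) + (r+1)*(2*r+2) := by ring
    rw [e]; exact mem4 (r+1) le_rfl
  | succ t' =>
    simp only [W, Finset.mem_union, Finset.mem_image, Finset.mem_range, Finset.mem_singleton]
    exact Or.inl (Or.inl (Or.inr ⟨t', by omega, rfl⟩))

lemma mem6 (k : ℕ) (h : k ≤ i) : (r+1+s)*(4*r+3) + r + k*(r+1) ∈ W r s i j := by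
  cases k with
  | zero => simpa using mem5 r le_rfl
  | succ k' =>
    simp only [W, Finset.mem_union, Finset.mem_image, Finset.mem_range, Finset.mem_singleton]
    exact Or.inl (Or.inr ⟨k', by omega, rfl⟩)

lemma mem7 : (r+1+s)*(4*r+3) + r + i*(r+1) + j ∈ W r s i j := by
  simp only [W, Finset.mem_union, Finset.mem_image, Finset.mem_range, Finset.mem_singleton]
  exact Or.inr trivial

lemma W_card : (W r s i j).card ≤ 4*r + s + i + 4 := by
  rw [W]
  apply le_trans (Finset.card_union_le _ _)
  apply le_trans (Nat.add_le_add_right (Finset.card_union_le _ _) _)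
  apply le_trans (Nat.add_le_add_right (Nat.add_le_add_right (Finset.card_union_le _ _) _) _)
  apply le_trans (Nat.add_le_add_right (Nat.add_le_add_right
    (Nat.add_le_add_right (Finset.card_union_le _ _) _) _) _)
  apply le_trans (Nat.add_le_add_right (Nat.add_le_add_right (Nat.add_le_add_right
    (Nat.add_le_add_right (Finset.card_union_le _ _) _) _) _) _)
  apply le_trans (Nat.add_le_add_right (Nat.add_le_add_right (Nat.add_le_add_right
    (Nat.add_le_add_right (Nat.add_le_add_right (Finset.card_union_le _ _) _) _) _) _) _)
  have g1 : (Finset.range (r+1)).card = r+1 := Finset.card_range _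
  have g2 : ((Finset.range (r+1)).image fun m => (m+1)*(2*r+1)).card ≤ r+1 :=
    le_trans Finset.card_image_le (le_of_eq (Finset.card_range _))
  have g3 : ((Finset.range s).image fun k => (r+1)*(2*r+1) + (k+1)*(4*r+3)).card ≤ s :=
    le_trans Finset.card_image_le (le_of_eq (Finset.card_range _))
  have g4 : ((Finset.range (r+1)).image
      fun m => (r+1)*(2*r+1) + s*(4*r+3) + (m+1)*(2*r+2)).card ≤ r+1 :=
    le_trans Finset.card_image_le (le_of_eq (Finset.card_range _))
  have g5 : ((Finset.range r).image fun t => (r+1+s)*(4*r+3) + (t+1)).card ≤ r :=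
    le_trans Finset.card_image_le (le_of_eq (Finset.card_range _))
  have g6 : ((Finset.range i).image fun k => (r+1+s)*(4*r+3) + r + (k+1)*(r+1)).card ≤ i :=
    le_trans Finset.card_image_le (le_of_eq (Finset.card_range _))
  have g7 : ({(r+1+s)*(4*r+3) + r + i*(r+1) + j} : Finset ℕ).card = 1 :=
    Finset.card_singleton _
  omega

lemma W_le : ∀ x ∈ W r s i j, x ≤ (r+1+s)*(4*r+3) + r + i*(r+1) + j := by
  intro x hx
  simp only [W, Finset.mem_union, Finset.mem_image, Finset.mem_range,
    Finset.mem_singleton] at hx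
  rcases hx with ((((((h | ⟨m, hm, rfl⟩) | ⟨k, hk, rfl⟩) | ⟨m, hm, rfl⟩) | ⟨t, ht, rfl⟩) |
      ⟨k, hk, rfl⟩) | rfl)
  · nlinarith [Nat.zero_le ((r+1+s)*(4*r+3)), Nat.zero_le (i*(r+1))]
  · have : (m+1)*(2*r+1) ≤ (r+1)*(2*r+1) := Nat.mul_le_mul (by omega) le_rfl
    nlinarith [Nat.zero_le (i*(r+1))]
  · have : (k+1)*(4*r+3) ≤ s*(4*r+3) := Nat.mul_le_mul (by omega) le_rfl
    nlinarith [Nat.zero_le (i*(r+1))]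
  · have : (m+1)*(2*r+2) ≤ (r+1)*(2*r+2) := Nat.mul_le_mul (by omega) le_rfl
    nlinarith [Nat.zero_le (i*(r+1))]
  · have : (r+1+s)*(4*r+3) + (t+1) ≤ (r+1+s)*(4*r+3) + r := by omega
    nlinarith [Nat.zero_le (i*(r+1))]
  · have : (k+1)*(r+1) ≤ i*(r+1) := Nat.mul_le_mul (by omega) le_rfl
    omega
  · exact le_rfl

theorem W_complete (r s i j : ℕ) (hj : j ≤ r) :
    ∀ d ≤ (r+1+s)*(4*r+3) + r + i*(r+1) + j,
    ∃ p ∈ W r s i j, ∃ q ∈ W r s i j, p = q + d := by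
  intro d hd
  by_cases hA : d ≤ (r+1)*(2*r+1)
  · -- Zone A
    obtain ⟨m, u, rfl, hu⟩ : ∃ m u, d = (2*r+1)*m + u ∧ u < 2*r+1 :=
      ⟨d / (2*r+1), d % (2*r+1), (Nat.div_add_mod d (2*r+1)).symm,
        Nat.mod_lt _ (by omega)⟩
    have hm : m ≤ r + 1 := by
      by_contra hc
      push_neg at hc
      have : (2*r+1)*(r+2) ≤ (2*r+1)*m := Nat.mul_le_mul le_rfl hc
      nlinarith
    by_cases hu0 : u = 0
    · subst hu0
      exact ⟨m*(2*r+1), mem2 m hm, 0, mem1 0 (Nat.zero_le r), by ring⟩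
    by_cases hur : r + 1 ≤ u
    · have hm' : m ≤ r := by
        by_contra hc
        push_neg at hc
        have hm1 : m = r+1 := by omega
        subst hm1
        nlinarith
      refine ⟨(m+1)*(2*r+1), mem2 (m+1) (by omega), 2*r+1 - u, mem1 _ (by omega), ?_⟩
      zify [hu.le]
      ring
    push_neg at hur
    by_cases hm0 : m = 0
    · subst hm0
      exact ⟨u, mem1 u (by omega), 0, mem1 0 (Nat.zero_le r), by ring⟩
    by_cases hum : m ≤ u
    · refine ⟨(r+1+s)*(4*r+3) + (u - m), mem5 _ (by omega),
        (r+1)*(2*r+1) + s*(4*r+3) + (r+1-m)*(2*r+2), mem4 _ (by omega), ?_⟩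
      zify [hum, hm]
      ring
    push_neg at hum
    by_cases h5a : m - u ≤ s ∧ m ≤ 2*u
    · refine ⟨(r+1)*(2*r+1) + s*(4*r+3) + (2*u - m)*(2*r+2), mem4 _ (by omega),
        (r+1)*(2*r+1) + (s - (m-u))*(4*r+3), mem3 _ (by omega), ?_⟩
      zify [h5a.1, h5a.2, hum.le]
      ring
    by_cases h5b : u ≤ s
    · have h2u : 2*u ≤ m := by omega
      refine ⟨(r+1)*(2*r+1) + u*(4*r+3), mem3 u h5b,
        (r+1+2*u - m)*(2*r+1), mem2 _ (by omega), ?_⟩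
      zify [show m ≤ r+1+2*u by omega]
      ring
    · have hmsu : s + u < m := by omega
      refine ⟨(r+1)*(2*r+1) + s*(4*r+3) + (u - s)*(2*r+2), mem4 _ (by omega),
        (r+1+s+u - m)*(2*r+1), mem2 _ (by omega), ?_⟩
      zify [show s ≤ u by omega, show m ≤ r+1+s+u by omega]
      ring
  push_neg at hA
  by_cases hBp : d < (r+1)*(2*r+1) + s*(4*r+3)
  · -- Zone B' : strictly between c0 and d0
    obtain ⟨x, rfl⟩ : ∃ x, d = (r+1)*(2*r+1) + x :=
      ⟨d - (r+1)*(2*r+1), (Nat.add_sub_cancel' hA.le).symm⟩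
    have hx1 : 1 ≤ x := by
      rcases Nat.eq_zero_or_pos x with h | h
      · subst h; omega
      · exact h
    have hxs : x < s*(4*r+3) := by omega
    obtain ⟨k, w, rfl, hw⟩ : ∃ k w, x = (4*r+3)*k + w ∧ w < 4*r+3 :=
      ⟨x / (4*r+3), x % (4*r+3), (Nat.div_add_mod x (4*r+3)).symm,
        Nat.mod_lt _ (by omega)⟩
    have hks : k < s := by
      by_contra hc
      push_neg at hc
      have : (4*r+3)*s ≤ (4*r+3)*k := Nat.mul_le_mul le_rfl hc
      have h2 : s*(4*r+3) = (4*r+3)*s := by ring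
      omega
    obtain ⟨g, rfl, hg⟩ : ∃ g, s = k + g ∧ 1 ≤ g := ⟨s - k, by omega, by omega⟩
    by_cases hw0 : w = 0
    · subst hw0
      exact ⟨(r+1)*(2*r+1) + k*(4*r+3), mem3 k (by omega), 0,
        mem1 0 (Nat.zero_le r), by ring⟩
    by_cases hw1 : 3*r+3 ≤ w
    · refine ⟨(r+1)*(2*r+1) + (k+1)*(4*r+3), mem3 (k+1) (by omega),
        4*r+3 - w, mem1 _ (by omega), ?_⟩
      zify [hw.le]
      ring
    by_cases hw2 : w = 2*r+2
    · subst hw2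
      exact ⟨(r+1)*(2*r+1) + (k+1)*(4*r+3), mem3 (k+1) (by omega),
        1*(2*r+1), mem2 1 (by omega), by ring⟩
    by_cases hw3 : r+1 ≤ w ∧ w ≤ 2*r+1
    · refine ⟨(r+1+(k+g))*(4*r+3) + (w - (r+1)), mem5 _ (by omega),
        (r+1)*(2*r+1) + g*(4*r+3), mem3 g (by omega), ?_⟩
      zify [hw3.1]
      ring
    by_cases hw4 : w ≤ r
    · -- small w : 1 ≤ w ≤ r
      by_cases h7 : r+2 ≤ 2*w ∧ r+2 ≤ w + g
      · refine ⟨(r+1)*(2*r+1) + (k+g)*(4*r+3) + (2*w - (r+1))*(2*r+2), mem4 _ (by omega),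
          (r+1)*(2*r+1) + (g - (r+1-w))*(4*r+3), mem3 _ (by omega), ?_⟩
        zify [show r+1 ≤ 2*w by omega, show r+1-w ≤ g by omega, show w ≤ r+1 by omega]
        ring
      by_cases h10 : w ≤ g
      · refine ⟨(r+1)*(2*r+1) + (k+w)*(4*r+3), mem3 (k+w) (by omega),
          (2*w)*(2*r+1), mem2 (2*w) (by omega), ?_⟩
        ring
      · refine ⟨(r+1)*(2*r+1) + (k+g)*(4*r+3) + (w - g)*(2*r+2), mem4 _ (by omega),
          (w+g)*(2*r+1), mem2 (w+g) (by omega), ?_⟩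
        zify [show g ≤ w by omega]
        ring
    · -- w ∈ [2r+3, 3r+2]
      obtain ⟨v, rfl, hv1, hv2⟩ : ∃ v, w = 2*r+2+v ∧ 1 ≤ v ∧ v ≤ r := by
        refine ⟨w - (2*r+2), by omega, by omega, by omega⟩
      by_cases h7b : r+2 ≤ v + g
      · by_cases h2v : r ≤ 2*v
        · refine ⟨(r+1)*(2*r+1) + (k+g)*(4*r+3) + (2*v - r)*(2*r+2), mem4 _ (by omega),
            (r+1)*(2*r+1) + (g - (r+1-v))*(4*r+3), mem3 _ (by omega), ?_⟩
          zify [show r ≤ 2*v by omega, show r+1-v ≤ g by omega, show v ≤ r+1 by omega]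
          ring
        · refine ⟨(r+1)*(2*r+1) + (k+v+1)*(4*r+3), mem3 (k+v+1) (by omega),
            (2*v+1)*(2*r+1), mem2 (2*v+1) (by omega), ?_⟩
          ring
      · by_cases h10b : v+1 ≤ g
        · refine ⟨(r+1)*(2*r+1) + (k+v+1)*(4*r+3), mem3 (k+v+1) (by omega),
            (2*v+1)*(2*r+1), mem2 (2*v+1) (by omega), ?_⟩
          ring
        · refine ⟨(r+1)*(2*r+1) + (k+g)*(4*r+3) + (v+1 - g)*(2*r+2), mem4 _ (by omega),
            (v+g)*(2*r+1), mem2 (v+g) (by omega), ?_⟩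
          zify [show g ≤ v+1 by omega]
          ring
  push_neg at hBp
  by_cases hBe : d < (r+1+s)*(4*r+3)
  · -- Zone B
    obtain ⟨x, rfl⟩ : ∃ x, d = (r+1)*(2*r+1) + s*(4*r+3) + x :=
      ⟨d - ((r+1)*(2*r+1) + s*(4*r+3)), (Nat.add_sub_cancel' hBp).symm⟩
    have he : (r+1+s)*(4*r+3) = (r+1)*(2*r+1) + s*(4*r+3) + (r+1)*(2*r+2) := by ring
    have hxe : x < (r+1)*(2*r+2) := by omega
    obtain ⟨m, v, rfl, hv⟩ : ∃ m v, x = (2*r+2)*m + v ∧ v < 2*r+2 :=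
      ⟨x / (2*r+2), x % (2*r+2), (Nat.div_add_mod x (2*r+2)).symm,
        Nat.mod_lt _ (by omega)⟩
    have hm : m ≤ r := by
      by_contra hc
      push_neg at hc
      have : (2*r+2)*(r+1) ≤ (2*r+2)*m := Nat.mul_le_mul le_rfl hc
      nlinarith
    by_cases hv0 : v = 0
    · subst hv0
      refine ⟨(r+1)*(2*r+1) + s*(4*r+3) + m*(2*r+2), mem4 m (by omega), 0,
        mem1 0 (Nat.zero_le r), by ring⟩
    by_cases hv1 : r+2 ≤ v
    · refine ⟨(r+1)*(2*r+1) + s*(4*r+3) + (m+1)*(2*r+2), mem4 (m+1) (by omega),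
        2*r+2 - v, mem1 _ (by omega), ?_⟩
      zify [hv.le]
      ring
    by_cases hmv : m + v ≤ r+1
    · refine ⟨(r+1)*(2*r+1) + s*(4*r+3) + (m+v)*(2*r+2), mem4 (m+v) hmv,
        v*(2*r+1), mem2 v (by omega), ?_⟩
      ring
    · refine ⟨(r+1+s)*(4*r+3) + (m+v - (r+1)), mem5 _ (by omega),
        (r+1-m)*(2*r+1), mem2 _ (by omega), ?_⟩
      zify [show r+1 ≤ m+v by omega, show m ≤ r+1 by omega]
      ring
  push_neg at hBe
  by_cases hC : d ≤ (r+1+s)*(4*r+3) + r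
  · -- Zone C
    refine ⟨(r+1+s)*(4*r+3) + (d - (r+1+s)*(4*r+3)), mem5 _ (by omega), 0,
      mem1 0 (Nat.zero_le r), ?_⟩
    omega
  push_neg at hC
  · -- Tail zone
    obtain ⟨x, rfl⟩ : ∃ x, d = ((r+1+s)*(4*r+3) + r) + x :=
      ⟨d - ((r+1+s)*(4*r+3) + r), (Nat.add_sub_cancel' hC.le).symm⟩
    have hx1 : 1 ≤ x := by omega
    have hxn : x ≤ i*(r+1) + j := by omega
    obtain ⟨kk, u, rfl, hu⟩ : ∃ kk u, x = (r+1)*kk + u ∧ u < r+1 :=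
      ⟨x / (r+1), x % (r+1), (Nat.div_add_mod x (r+1)).symm, Nat.mod_lt _ (by omega)⟩
    by_cases hu0 : u = 0
    · subst hu0
      have hk : kk ≤ i := by
        by_contra hc
        push_neg at hc
        have h1 : (r+1)*(i+1) ≤ (r+1)*kk := Nat.mul_le_mul le_rfl hc
        have h2 : i*(r+1) = (r+1)*i := by ring
        have h3 : (r+1)*(i+1) = (r+1)*i + (r+1) := by ring
        omega
      refine ⟨(r+1+s)*(4*r+3) + r + kk*(r+1), mem6 kk hk, 0,
        mem1 0 (Nat.zero_le r), by ring⟩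
    by_cases hki : kk + 1 ≤ i
    · refine ⟨(r+1+s)*(4*r+3) + r + (kk+1)*(r+1), mem6 (kk+1) hki,
        r+1 - u, mem1 _ (by omega), ?_⟩
      zify [hu.le]
      ring
    · have hik : i ≤ kk := by omega
      have h1 : i*(r+1) ≤ kk*(r+1) := Nat.mul_le_mul hik le_rfl
      have h2 : kk*(r+1) = (r+1)*kk := by ring
      refine ⟨(r+1+s)*(4*r+3) + r + i*(r+1) + j, mem7,
        ((r+1+s)*(4*r+3) + r + i*(r+1) + j) - (((r+1+s)*(4*r+3) + r) + ((r+1)*kk + u)),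
        mem1 _ (by omega), ?_⟩
      omega

lemma key_ineq (n r s i k : ℤ) (hr0 : 0 ≤ r) (hs0 : 0 ≤ s) (hi0 : 0 ≤ i) (hn : 3 ≤ n)
    (hk2 : k^2 ≤ 3*n) (hk3 : 3*n < (k+1)^2)
    (hr : 6*r+1 ≤ k) (hr2 : k ≤ 6*r+6)
    (hF1 : 4*r*r+8*r+3 + (4*r+3)*s + (r+1)*i ≤ n) (hi4 : (r+1)*i ≤ 4*r+2) :
    (4*r+s+i)^2 ≤ 3*n := by
  have hi3 : i ≤ 3 := by nlinarith
  rcases le_or_gt (s+4) (2*r) with hc | hc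
  · calc (4*r+s+i)^2 ≤ k^2 := by nlinarith
    _ ≤ 3*n := hk2
  · have hk1 : k+1 ≤ 6*r+7 := by linarith
    have hub : 3*n ≤ 36*r^2+84*r+48 := by
      nlinarith [sq_nonneg (k+1), mul_le_mul hk1 hk1 (by linarith) (by linarith)]
    have hs4 : s ≤ 2*r+4 := by nlinarith
    clear hk2 hk3 hr hr2 hk1 hn hi4
    nlinarith [mul_nonneg (by linarith : (0:ℤ) ≤ s+3-2*r) (by linarith : (0:ℤ) ≤ 2*r+4-s),
      mul_nonneg hi0 (by linarith : (0:ℤ) ≤ 3-i),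
      mul_nonneg hr0 (by linarith : (0:ℤ) ≤ 3-i),
      mul_nonneg hs0 (by linarith : (0:ℤ) ≤ 3-i),
      mul_nonneg hr0 (by linarith : (0:ℤ) ≤ s+3-2*r),
      mul_nonneg hi0 (by linarith : (0:ℤ) ≤ 2*r+4-s)]

end SparseAux

namespace SparseAux

lemma M1_le_card {n : ℕ} {R : Finset ℕ} (h : IsCompleteRuler n R) : M1 n ≤ R.card :=
  Nat.sInf_le ⟨R, h, rfl⟩

end SparseAux

open SparseAux in
/-- For all `n ≥ 1`, `M₁(n) ≤ √(3n) + 4`. -/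
theorem M1_le (n : ℕ) (hn : 1 ≤ n) : (M1 n : ℝ) ≤ Real.sqrt (3 * n) + 4 := by
  rcases le_or_gt n 2 with h2 | h2
  · -- trivial ruler
    have hR : IsCompleteRuler n (Finset.range (n+1)) := by
      refine ⟨fun x hx => by simp at hx; omega, by simp, by simp, fun d hd => ?_⟩
      exact ⟨d, by simp; omega, 0, by simp, by omega⟩
    have h3 : M1 n ≤ 3 := by
      have := M1_le_card hR
      simp [Finset.card_range] at this
      omega
    have h4 : (M1 n : ℝ) ≤ 3 := by exact_mod_cast h3
    have := Real.sqrt_nonneg (3 * (n:ℝ))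
    linarith
  · -- main case, n ≥ 3
    have hk2 : Nat.sqrt (3*n) ^ 2 ≤ 3*n := Nat.sqrt_le' (3*n)
    have hk3 : 3*n < (Nat.sqrt (3*n) + 1) ^ 2 := Nat.lt_succ_sqrt' (3*n)
    set k := Nat.sqrt (3*n) with hk
    have hk9 : 3 ≤ k := by
      have h9 : 9 ≤ 3*n := by omega
      by_contra hc
      push_neg at hc
      interval_cases k <;> omega
    set r := (k - 1) / 6 with hr
    have hr6 := Nat.div_add_mod (k-1) 6
    have hrmod : (k-1) % 6 < 6 := Nat.mod_lt _ (by omega)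
    have hrk : 6*r + 1 ≤ k ∧ k ≤ 6*r + 6 := by omega
    have hbase : 4*r*r + 8*r + 3 ≤ n := by
      rcases Nat.eq_zero_or_pos r with h0 | h0
      · rw [h0]; omega
      · have h1 : (6*r+1)*(6*r+1) ≤ k*k := Nat.mul_le_mul hrk.1 hrk.1
        nlinarith
    have h1 := Nat.div_add_mod (n - (4*r*r+8*r+3)) (4*r+3)
    set s := (n - (4*r*r+8*r+3)) / (4*r+3) with hs
    set rem := (n - (4*r*r+8*r+3)) % (4*r+3) with hrem
    have hrem2 : rem < 4*r+3 := Nat.mod_lt _ (by omega)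
    have h2' := Nat.div_add_mod rem (r+1)
    set i := rem / (r+1) with hi
    set jj := rem % (r+1) with hjj
    have hj : jj ≤ r := by
      have := Nat.mod_lt rem (show 0 < r+1 by omega)
      omega
    have hBn : (4*r*r+8*r+3) + ((4*r+3)*s + rem) = n := by
      rw [h1]; exact Nat.add_sub_cancel' hbase
    have hn' : n = (r+1+s)*(4*r+3) + r + i*(r+1) + jj := by
      have e1 : (r+1+s)*(4*r+3) + r = (4*r*r+8*r+3) + (4*r+3)*s := by ring
      have e2 : i*(r+1) = (r+1)*i := by ring
      omega
    have hcr : IsCompleteRuler n (W r s i jj) := by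
      refine ⟨?_, mem1 0 (Nat.zero_le r), ?_, ?_⟩
      · intro x hx; rw [hn']; exact W_le x hx
      · rw [hn']; exact mem7
      · intro d hd
        rw [hn'] at hd
        exact W_complete r s i jj hj d hd
    have hM : M1 n ≤ 4*r + s + i + 4 := le_trans (M1_le_card hcr) W_card
    have hkey : (4*r + s + i)^2 ≤ 3*n := by
      have hF1n : 4*r*r+8*r+3 + (4*r+3)*s + (r+1)*i ≤ n := by omega
      have hi4n : (r+1)*i ≤ 4*r+2 := by omega
      have hz := key_ineq (n:ℤ) (r:ℤ) (s:ℤ) (i:ℤ) (k:ℤ) (by positivity) (by positivity)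
        (by positivity) (by exact_mod_cast (show 3 ≤ n by omega))
        (by exact_mod_cast hk2) (by exact_mod_cast hk3)
        (by exact_mod_cast hrk.1) (by exact_mod_cast hrk.2)
        (by exact_mod_cast hF1n) (by exact_mod_cast hi4n)
      exact_mod_cast hz
    have hsq : ((4*r + s + i : ℕ) : ℝ) ≤ Real.sqrt (3 * n) := by
      have h5 : ((4*r + s + i : ℕ) : ℝ)^2 ≤ ((3*n : ℕ) : ℝ) := by exact_mod_cast hkey
      calc ((4*r + s + i : ℕ) : ℝ) = Real.sqrt (((4*r + s + i : ℕ) : ℝ)^2) :=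
            (Real.sqrt_sq (by positivity)).symm
        _ ≤ Real.sqrt (3 * n) := by
            apply Real.sqrt_le_sqrt
            push_cast at h5 ⊢
            linarith
    have hMr : (M1 n : ℝ) ≤ ((4*r + s + i : ℕ) : ℝ) + 4 := by
      have : (M1 n : ℝ) ≤ ((4*r + s + i + 4 : ℕ) : ℝ) := by exact_mod_cast hM
      push_cast at this ⊢
      linarith
    linarith
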